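/- arXiv:1604.04497 — 2 statements merged into one kernel-verified Lean document; each statement's English description precedes it below -/
import Mathlib

section
/- Consider a 2L × 2L matrix whose columns correspond to the edges of a bipartite cycle (s_1,c_1),(s_1,c_2),(s_2,c_2),(s_2,c_3),...,(s_L,c_L),(s_L,c_1), where the column of edge (s_j,c_i) has a 1 in the row of server s_j and entry −a_{j,i} in the row of customer c_i (a_{j,i} > 0), and all other entries 0. Then its determinant equals ± (a_{1,1} a_{2,2} ⋯ a_{L,L} − a_{1,2} a_{2,3} ⋯ a_{L,1}); in particular, the matrix is singular if and only if a_{1,1} a_{2,2} ⋯ a_{L,L} = a_{1,2} a_{2,3} ⋯ a_{L,1}. -/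
open Finset Matrix

open Fin.NatCast Fin.CommRing in
lemma perm_classify (n : ℕ) (hn : 1 ≤ n) (σ : Equiv.Perm (Fin (n+1)))
    (h : ∀ i, σ i = i ∨ σ i = i + 1) : σ = 1 ∨ σ = finRotate (n+1) := by
  have h10 : (1 : Fin (n+1)) ≠ 0 := by
    simp [Fin.ext_iff]; omega
  by_cases hid : ∀ i, σ i = i
  · exact Or.inl (Equiv.ext hid)
  · push_neg at hid
    obtain ⟨i, hi⟩ := hid
    have hi1 : σ i = i + 1 := (h i).resolve_left hi
    have step : ∀ k : Fin (n+1), σ k = k + 1 → σ (k+1) = k + 1 + 1 := by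
      intro k hk
      rcases h (k+1) with h' | h'
      · exfalso
        have h2 : k + 1 = k := σ.injective (by rw [h', hk])
        have h3 : k + 1 = k + 0 := by simpa using h2
        exact h10 (add_left_cancel h3)
      · exact h'
    have key : ∀ m : ℕ, σ (i + (m : Fin (n+1))) = i + (m : Fin (n+1)) + 1 := by
      intro m
      induction m with
      | zero => simpa using hi1
      | succ m ih =>
        have h4 := step _ ih
        push_cast
        convert h4 using 2 <;> ring
    right
    refine Equiv.ext fun k => ?_
    have h5 := key ((k - i).val)
    rw [Fin.cast_val_eq_self] at h5
    have hik : i + (k - i) = k := by ring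
    rw [hik] at h5
    rw [finRotate_succ_apply, h5]

lemma one_ne_finRotate (n : ℕ) (hn : 1 ≤ n) :
    (1 : Equiv.Perm (Fin (n+1))) ≠ finRotate (n+1) := by
  have h10 : (1 : Fin (n+1)) ≠ 0 := by simp [Fin.ext_iff]; omega
  intro hcontra
  have : (0 : Fin (n+1)) = 0 + 1 := by
    conv_lhs => rw [show (0:Fin (n+1)) = (1 : Equiv.Perm (Fin (n+1))) 0 from rfl,
      hcontra, finRotate_succ_apply]
  rw [zero_add] at this
  exact h10 this.symm

lemma cyc_det (n : ℕ) (hn : 1 ≤ n) (d e : Fin (n+1) → ℝ) :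
    Matrix.det (Matrix.of fun i j => if i = j then d j else if i = j + 1 then e j else 0)
      = ∏ j, d j + (-1)^n * ∏ j, e j := by
  have h10 : (1 : Fin (n+1)) ≠ 0 := by simp [Fin.ext_iff]; omega
  have hadd : ∀ i : Fin (n+1), i + 1 ≠ i := by
    intro i hcon
    have : i + 1 = i + 0 := by simpa using hcon
    exact h10 (add_left_cancel this)
  rw [Matrix.det_apply]
  rw [← Finset.sum_subset (Finset.subset_univ ({1, finRotate (n+1)} : Finset (Equiv.Perm (Fin (n+1)))))]
  · rw [Finset.sum_pair (one_ne_finRotate n hn)]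
    have t1 : ∏ i, (Matrix.of fun i j => if i = j then d j else if i = j + 1 then e j else 0)
        (((1 : Equiv.Perm (Fin (n+1)))) i) i = ∏ j, d j := by
      apply Finset.prod_congr rfl
      intro i _
      simp
    have t2 : ∏ i, (Matrix.of fun i j => if i = j then d j else if i = j + 1 then e j else 0)
        ((finRotate (n+1)) i) i = ∏ j, e j := by
      apply Finset.prod_congr rfl
      intro i _
      simp [finRotate_succ_apply, hadd i]
    rw [t1, t2, Equiv.Perm.sign_one, sign_finRotate]
    simp [Units.smul_def]
  · intro σ _ hσ
    simp only [Finset.mem_insert, Finset.mem_singleton] at hσ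
    push_neg at hσ
    have := perm_classify n hn σ
    have h6 : ¬ ∀ i, σ i = i ∨ σ i = i + 1 := by
      intro hall
      rcases this hall with h' | h' <;> [exact hσ.1 h'; exact hσ.2 h']
    push_neg at h6
    obtain ⟨i, hi1, hi2⟩ := h6
    have : (Matrix.of fun i j => if i = j then d j else if i = j + 1 then e j else 0) (σ i) i = 0 := by
      simp [hi1, hi2]
    have hz : ∏ x, (Matrix.of fun i j => if i = j then d j else if i = j + 1 then e j else 0) (σ x) x = 0 :=
      Finset.prod_eq_zero (Finset.mem_univ i) this
    rw [hz]
    simp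


/-- The `2L × 2L` constraint matrix of a bipartite cycle of edges
`(s_1,c_1),(s_1,c_2),(s_2,c_2),…,(s_L,c_L),(s_L,c_1)`, where column `(s_j,c_j)` has
a `1` in row `s_j` and `-a j` in row `c_j`, and column `(s_j,c_{j+1})` has a `1` in
row `s_j` and `-b j` in row `c_{j+1}`, has determinant
`±(a_1⋯a_L − b_1⋯b_L)`; in particular it is singular iff `∏ a = ∏ b`. -/
theorem cycle_matrix_det (L : ℕ) [NeZero L] (hL : 2 ≤ L)
    (a b : Fin L → ℝ) (ha : ∀ j, 0 < a j) (hb : ∀ j, 0 < b j) :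
    let M : Matrix (Fin L ⊕ Fin L) (Fin L ⊕ Fin L) ℝ :=
      fun i e =>
        match i, e with
        | Sum.inl i, Sum.inl j => if i = j then 1 else 0
        | Sum.inr i, Sum.inl j => if i = j then -(a j) else 0
        | Sum.inl i, Sum.inr j => if i = j then 1 else 0
        | Sum.inr i, Sum.inr j => if i = j + 1 then -(b j) else 0
    (M.det = ∏ j, a j - ∏ j, b j ∨ M.det = ∏ j, b j - ∏ j, a j) ∧
      (M.det = 0 ↔ ∏ j, a j = ∏ j, b j) := by
  intro M
  obtain ⟨n, rfl⟩ : ∃ n, L = n + 1 := ⟨L - 1, by omega⟩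
  have hn : 1 ≤ n := by omega
  have h10 : (1 : Fin (n+1)) ≠ 0 := by simp [Fin.ext_iff]; omega
  have hM : M = Matrix.fromBlocks 1 1
      (Matrix.of fun i j => if i = j then -(a j) else 0)
      (Matrix.of fun i j => if i = (j:Fin (n+1)) + 1 then -(b j) else 0) := by
    ext i j
    cases i <;> cases j <;> simp [M, Matrix.fromBlocks, Matrix.one_apply]
  have hdet : M.det = ∏ j, a j - ∏ j, b j := by
    rw [hM, Matrix.det_fromBlocks_one₁₁]
    have heq : (Matrix.of fun i j => if i = (j:Fin (n+1)) + 1 then -(b j) else 0) -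
        (Matrix.of fun i j => if i = j then -(a j) else 0) * 1 =
        Matrix.of fun i j => if i = j then a j else if i = j + 1 then -(b j) else 0 := by
      ext i j
      by_cases h1 : i = j
      · subst h1
        have : ¬ (i = i + 1) := fun hc => h10 (by
          have : i + 1 = i + 0 := by simpa using hc.symm
          exact add_left_cancel this)
        simp [this]
      · have hn0 : n ≠ 0 := by omega
        by_cases h2 : i = j + 1 <;> simp [h1, h2, hn0]
    rw [heq, cyc_det n hn]
    have hprodneg : ∏ j, -(b j) = (-1)^(n+1) * ∏ j, b j := by
      calc ∏ j : Fin (n+1), -(b j) = ∏ j : Fin (n+1), (-1) * b j := by simp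
        _ = (∏ _j : Fin (n+1), (-1:ℝ)) * ∏ j, b j := Finset.prod_mul_distrib
        _ = (-1)^(n+1) * ∏ j, b j := by simp
    rw [hprodneg]
    have : ((-1:ℝ))^n * ((-1)^(n+1) * ∏ j, b j) = -∏ j, b j := by
      rw [← mul_assoc, ← pow_add]
      rw [Odd.neg_one_pow ⟨n, by ring⟩]
      ring
    rw [this]
    ring
  refine ⟨Or.inl hdet, ?_⟩
  rw [hdet, sub_eq_zero]
end

section
/- In the customer-dependent (CD) case, define for each nonempty proper subset D ⊊ C the condition |S(D)|/|S| > (Σ_{c∈D} α_c m_c)/(Σ_{c∈C} α_c m_c), where S(D) is the set of servers compatible with some type in D. If this condition holds for all nonempty proper D, then for any ordered partition (S_1,...,S_L) of S with L ≥ 2 satisfying U(S_1) ≠ ∅ (where U(S_1) = C \ C(S \ S_1)), the velocities v_1 = |S_1| / Σ_{c ∈ U(S_1)} α_c m_c and v_L = |S_L| / Σ_{c ∈ C(S_L)} α_c m_c satisfy v_1 > |S| / Σ_{c ∈ C} α_c m_c > v_L. -/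
open Finset
open scoped Classical

/-- In the customer-dependent case, if the complete resource pooling condition
`|S(D)|/|S| > (Σ_{c∈D} α_c m_c)/(Σ_{c∈C} α_c m_c)` holds for every nonempty proper
`D ⊊ C`, then for any ordered partition `(S_1,…,S_L)` of the servers with `L ≥ 2`
and `U(S_1) ≠ ∅`, the leading velocity exceeds the pooled velocity, which exceeds
the trailing velocity. -/
theorem cd_pooling_velocity_inequalities {Srv Cst : Type*} [Fintype Srv] [Fintype Cst]
    (G : Srv → Cst → Prop) (m α : Cst → ℝ)
    (hm : ∀ c, 0 < m c) (hα : ∀ c, 0 < α c)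
    (hCRP : ∀ D : Finset Cst, D.Nonempty → D ≠ Finset.univ →
      ((Finset.univ.filter (fun s => ∃ c ∈ D, G s c)).card : ℝ) / (Fintype.card Srv : ℝ) >
        (∑ c ∈ D, α c * m c) / (∑ c : Cst, α c * m c))
    (L : ℕ) (hL : 2 ≤ L) (P : Fin L → Finset Srv)
    (hdisj : ∀ i j, i ≠ j → Disjoint (P i) (P j))
    (hcover : Finset.univ.biUnion P = Finset.univ)
    (hne : ∀ i, (P i).Nonempty)
    (S1 SL : Finset Srv) (hS1 : S1 = P ⟨0, by omega⟩) (hSL : SL = P ⟨L - 1, by omega⟩)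
    (hU1 : (Finset.univ.filter (fun c => ∀ s, G s c → s ∈ S1)).Nonempty)
    (hCL : (Finset.univ.filter (fun c => ∃ s ∈ SL, G s c)).Nonempty) :
    (S1.card : ℝ) / (∑ c ∈ Finset.univ.filter (fun c => ∀ s, G s c → s ∈ S1), α c * m c) >
        (Fintype.card Srv : ℝ) / (∑ c : Cst, α c * m c) ∧
    (Fintype.card Srv : ℝ) / (∑ c : Cst, α c * m c) >
        (SL.card : ℝ) / (∑ c ∈ Finset.univ.filter (fun c => ∃ s ∈ SL, G s c), α c * m c) := by

  classical
  -- basic positivity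
  obtain ⟨c0, hc0⟩ := hU1
  haveI : Nonempty Cst := ⟨c0⟩
  have hWpos : 0 < ∑ c : Cst, α c * m c :=
    Finset.sum_pos (fun c _ => mul_pos (hα c) (hm c)) Finset.univ_nonempty
  obtain ⟨s0, hs0⟩ := hne ⟨0, by omega⟩
  haveI : Nonempty Srv := ⟨s0⟩
  have hSpos : (0 : ℝ) < (Fintype.card Srv : ℝ) := by
    exact_mod_cast Fintype.card_pos
  have hij : ((⟨0, by omega⟩ : Fin L) ≠ ⟨L - 1, by omega⟩) := by
    intro h
    have h2 : (0 : ℕ) = L - 1 := congrArg Fin.val h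
    omega
  have hdisj1L : Disjoint S1 SL := by
    rw [hS1, hSL]; exact hdisj _ _ hij
  set D : Finset Cst := Finset.univ.filter (fun c => ∀ s, G s c → s ∈ S1) with hD
  set E : Finset Cst := Finset.univ.filter (fun c => ∃ s ∈ SL, G s c) with hE
  have hDpos : 0 < ∑ c ∈ D, α c * m c :=
    Finset.sum_pos (fun c _ => mul_pos (hα c) (hm c)) ⟨c0, hc0⟩
  obtain ⟨cL, hcL⟩ := hCL
  have hEpos : 0 < ∑ c ∈ E, α c * m c :=
    Finset.sum_pos (fun c _ => mul_pos (hα c) (hm c)) ⟨cL, hcL⟩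
  obtain ⟨sL, hsLmem, hsLG⟩ := (Finset.mem_filter.mp hcL).2
  constructor
  · -- first inequality
    have hDneuniv : D ≠ Finset.univ := by
      intro h
      have hcLD : cL ∈ D := h ▸ Finset.mem_univ cL
      have := (Finset.mem_filter.mp hcLD).2 sL hsLG
      exact (Finset.disjoint_left.mp hdisj1L this) hsLmem
    have hcrp := hCRP D ⟨c0, hc0⟩ hDneuniv
    have hsub : (Finset.univ.filter (fun s => ∃ c ∈ D, G s c)) ⊆ S1 := by
      intro s hs
      obtain ⟨c, hcD, hGsc⟩ := (Finset.mem_filter.mp hs).2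
      exact (Finset.mem_filter.mp hcD).2 s hGsc
    have hcard : ((Finset.univ.filter (fun s => ∃ c ∈ D, G s c)).card : ℝ) ≤ (S1.card : ℝ) := by
      exact_mod_cast Finset.card_le_card hsub
    have h1 : (∑ c ∈ D, α c * m c) / (∑ c : Cst, α c * m c) < (S1.card : ℝ) / (Fintype.card Srv : ℝ) := by
      refine lt_of_lt_of_le hcrp ?_
      exact div_le_div_of_nonneg_right hcard hSpos.le |>.trans_eq rfl
    rw [div_lt_div_iff₀ hWpos hSpos] at h1
    rw [gt_iff_lt, div_lt_div_iff₀ hWpos hDpos]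
    nlinarith
  · -- second inequality
    rw [gt_iff_lt, div_lt_div_iff₀ hEpos hWpos]
    by_cases hEu : E = Finset.univ
    · have hW : ∑ c ∈ E, α c * m c = ∑ c : Cst, α c * m c := by rw [hEu]
      have hs0notSL : s0 ∉ SL := by
        intro h
        exact (Finset.disjoint_left.mp hdisj1L (hS1 ▸ hs0)) h
      have : SL.card < Fintype.card Srv := by
        rw [← Finset.card_univ]
        exact Finset.card_lt_card ((Finset.ssubset_univ_iff).mpr (fun h => hs0notSL (h ▸ Finset.mem_univ s0)))
      have hlt : (SL.card : ℝ) < (Fintype.card Srv : ℝ) := by exact_mod_cast this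
      rw [hW]
      nlinarith
    · have hEcne : Eᶜ.Nonempty := by
        by_contra h
        rw [Finset.not_nonempty_iff_eq_empty] at h
        exact hEu ((Finset.compl_eq_empty_iff E).mp h)
      have hEcneuniv : Eᶜ ≠ Finset.univ := by
        intro h
        have : cL ∈ Eᶜ := h ▸ Finset.mem_univ cL
        exact (Finset.mem_compl.mp this) hcL
      have hcrp := hCRP Eᶜ hEcne hEcneuniv
      have hsub : (Finset.univ.filter (fun s => ∃ c ∈ Eᶜ, G s c)) ⊆ SLᶜ := by
        intro s hs
        obtain ⟨c, hcEc, hGsc⟩ := (Finset.mem_filter.mp hs).2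
        rw [Finset.mem_compl]
        intro hsSL
        exact (Finset.mem_compl.mp hcEc) (Finset.mem_filter.mpr ⟨Finset.mem_univ c, ⟨s, hsSL, hGsc⟩⟩)
      have hcard : ((Finset.univ.filter (fun s => ∃ c ∈ Eᶜ, G s c)).card : ℝ) ≤ (Fintype.card Srv : ℝ) - (SL.card : ℝ) := by
        have h1 : (Finset.univ.filter (fun s => ∃ c ∈ Eᶜ, G s c)).card ≤ SLᶜ.card :=
          Finset.card_le_card hsub
        have h2 : SLᶜ.card = Fintype.card Srv - SL.card := Finset.card_compl SL
        have h3 : SL.card ≤ Fintype.card Srv := Finset.card_le_univ SL |>.trans_eq Finset.card_univ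
        calc ((Finset.univ.filter (fun s => ∃ c ∈ Eᶜ, G s c)).card : ℝ) ≤ (SLᶜ.card : ℝ) := by
              exact_mod_cast h1
          _ = (Fintype.card Srv : ℝ) - (SL.card : ℝ) := by rw [h2, Nat.cast_sub h3]
      have hsumc : (∑ c ∈ Eᶜ, α c * m c) = (∑ c : Cst, α c * m c) - (∑ c ∈ E, α c * m c) := by
        have := Finset.sum_add_sum_compl E (fun c => α c * m c)
        linarith
      have h1 : (∑ c ∈ Eᶜ, α c * m c) / (∑ c : Cst, α c * m c) <
          ((Fintype.card Srv : ℝ) - (SL.card : ℝ)) / (Fintype.card Srv : ℝ) :=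
        lt_of_lt_of_le hcrp (div_le_div_of_nonneg_right hcard hSpos.le |>.trans_eq rfl)
      rw [hsumc, div_lt_div_iff₀ hWpos hSpos] at h1
      nlinarith
end
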